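/- For 1 ≤ i ≤ (n+1)/2, the polynomial identity 2·δ(Δ^i × ℓ^{n+1-2i}, t) − δ(Δ^{i-1} × ℓ^{n+3-2i}, t) = (1−t)·δ(Δ^{i-1} × ℓ^{n-2(i-1)}, t) holds; consequently δ_j(Δ^{i-1} × ℓ^{n+3-2i}) ≤ 2δ_j(Δ^i × ℓ^{n+1-2i}) for 0 ≤ j ≤ ⌊(n-1)/2⌋ and the reverse inequality holds for ⌊(n-1)/2⌋+1 ≤ j ≤ n-1. -/

import Mathlib

/-- `δ(Δ^a × ℓ^b, t) = (1-t)^{2a+b+1} ∑_{m≥0} ((m+1)(m+2)/2)^a (m+1)^b t^m`,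
the δ-polynomial of `Δ^a × ℓ^b` where `Δ` is the standard 2-simplex and `ℓ`
the unit segment. -/
noncomputable def deltaSC (a b : ℕ) : PowerSeries ℤ :=
  (1 - PowerSeries.X) ^ (2 * a + b + 1) *
    PowerSeries.mk (fun m : ℕ =>
      ((((m : ℤ) + 1) * ((m : ℤ) + 2) / 2) ^ a * ((m : ℤ) + 1) ^ b : ℤ))

open PowerSeries

namespace TwoDeltaAux

/-- the Ehrhart counting function of `Δ^a × ℓ^b`. -/
def gfun (a b : ℕ) (m : ℕ) : ℤ := (((m:ℤ)+1) * ((m:ℤ)+2) / 2) ^ a * ((m:ℤ)+1) ^ b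

lemma two_mul_T (m : ℕ) : 2 * (((m:ℤ)+1) * ((m:ℤ)+2) / 2) = ((m:ℤ)+1) * ((m:ℤ)+2) := by
  have h : (2:ℤ) ∣ ((m:ℤ)+1) * ((m:ℤ)+2) := by
    simpa [show ((m:ℤ)+1)+1 = (m:ℤ)+2 by ring] using
      (Int.even_mul_succ_self ((m:ℤ)+1)).two_dvd
  exact Int.mul_ediv_cancel' h

lemma deltaSC_eq (a b : ℕ) :
    deltaSC a b = (1 - X) ^ (2*a+b+1) * PowerSeries.mk (gfun a b) := rfl

lemma mk_eq {f g : ℕ → ℤ} (h : ∀ m, f m = g m) :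
    PowerSeries.mk f = PowerSeries.mk g := by
  ext n; simp [coeff_mk, h]

lemma key_identity (a b : ℕ) :
    2 * deltaSC (a+1) b - deltaSC a (b+2) = (1 - X) * deltaSC a (b+1) := by
  rw [deltaSC_eq, deltaSC_eq, deltaSC_eq]
  rw [show 2*a+(b+2)+1 = 2*(a+1)+b+1 by ring,
      show 2*(a+1)+b+1 = (2*a+(b+1)+1)+1 by ring, pow_succ]
  have hmk : 2 * PowerSeries.mk (gfun (a+1) b) - PowerSeries.mk (gfun a (b+2))
      = PowerSeries.mk (gfun a (b+1)) := by
    ext n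
    rw [map_sub, two_mul, map_add]
    simp only [coeff_mk, gfun]
    linear_combination ((((n:ℤ)+1) * ((n:ℤ)+2) / 2)^a * ((n:ℤ)+1)^b) * two_mul_T n
  calc 2 * ((1-X)^(2*a+(b+1)+1) * (1-X) * PowerSeries.mk (gfun (a+1) b))
        - (1-X)^(2*a+(b+1)+1) * (1-X) * PowerSeries.mk (gfun a (b+2))
      = (1-X) * ((1-X)^(2*a+(b+1)+1) *
          (2 * PowerSeries.mk (gfun (a+1) b) - PowerSeries.mk (gfun a (b+2)))) := by ring
    _ = (1 - X) * ((1-X)^(2*a+(b+1)+1) * PowerSeries.mk (gfun a (b+1))) := by rw [hmk]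


/-- `ℤ`-indexed coefficients of a power series (zero at negative indices). -/
noncomputable def zc (φ : PowerSeries ℤ) (j : ℤ) : ℤ :=
  if 0 ≤ j then PowerSeries.coeff j.toNat φ else 0

lemma zc_neg (φ : PowerSeries ℤ) {j : ℤ} (h : j < 0) : zc φ j = 0 := by
  simp [zc, not_le.2 h]

lemma zc_natCast (φ : PowerSeries ℤ) (k : ℕ) : zc φ k = PowerSeries.coeff k φ := by
  simp [zc]

lemma zc_add (φ ψ : PowerSeries ℤ) (j : ℤ) : zc (φ + ψ) j = zc φ j + zc ψ j := by
  unfold zc; split <;> simp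

lemma zc_sub (φ ψ : PowerSeries ℤ) (j : ℤ) : zc (φ - ψ) j = zc φ j - zc ψ j := by
  unfold zc; split <;> simp

lemma zc_C_mul (a : ℤ) (φ : PowerSeries ℤ) (j : ℤ) :
    zc (PowerSeries.C a * φ) j = a * zc φ j := by
  unfold zc
  split
  · exact PowerSeries.coeff_C_mul _ _ _
  · simp

lemma zc_X_mul (φ : PowerSeries ℤ) (j : ℤ) : zc (X * φ) j = zc φ (j - 1) := by
  rcases lt_or_ge j 0 with h | h
  · rw [zc_neg _ h, zc_neg _ (by omega)]
  rcases eq_or_lt_of_le h with h0 | h1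
  · rw [← h0]
    simp [zc, show ¬ (0:ℤ) ≤ -1 by norm_num]
  · obtain ⟨k, rfl⟩ : ∃ k : ℕ, j = (k:ℤ) + 1 := ⟨(j-1).toNat, by omega⟩
    rw [show (k:ℤ) + 1 - 1 = (k:ℤ) by ring, zc_natCast,
      show ((k:ℤ)+1) = ((k+1:ℕ):ℤ) by push_cast; ring, zc_natCast,
      PowerSeries.coeff_succ_X_mul]

lemma zc_one_sub_X_mul (φ : PowerSeries ℤ) (j : ℤ) :
    zc ((1 - X) * φ) j = zc φ j - zc φ (j - 1) := by
  rw [sub_mul, one_mul, zc_sub, zc_X_mul]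

lemma zc_deriv (φ : PowerSeries ℤ) (j : ℤ) :
    zc (PowerSeries.derivative ℤ φ) j = (j + 1) * zc φ (j + 1) := by
  rcases lt_or_ge j 0 with h | h
  · rw [zc_neg _ h]
    rcases eq_or_lt_of_le (show j ≤ -1 by omega) with h1 | h2
    · subst h1; norm_num
    · rw [zc_neg _ (by omega)]; ring
  · obtain ⟨k, rfl⟩ : ∃ k : ℕ, j = (k:ℤ) := ⟨j.toNat, by omega⟩
    rw [zc_natCast, show (k:ℤ)+1 = ((k+1:ℕ):ℤ) by push_cast; ring, zc_natCast,
      PowerSeries.coeff_derivative]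
    push_cast; ring

/-- The key series identity behind the "multiply by a segment" step. -/
lemma gen (N : ℕ) (g : ℕ → ℤ) :
    (1 - X : PowerSeries ℤ)^(N+2) * PowerSeries.mk (fun m => ((m:ℤ)+1) * g m)
      = (1-X) * ((1-X)^(N+1) * PowerSeries.mk g)
        + PowerSeries.C ((N:ℤ)+1) * (X * ((1-X)^(N+1) * PowerSeries.mk g))
        + X * (1-X) * (PowerSeries.derivative ℤ ((1-X)^(N+1) * PowerSeries.mk g)) := by
  have hmk : PowerSeries.mk (fun m => ((m:ℤ)+1) * g m)
      = PowerSeries.mk g + X * PowerSeries.derivative ℤ (PowerSeries.mk g) := by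
    ext n
    cases n with
    | zero => simp [coeff_mk]
    | succ n =>
        rw [map_add, PowerSeries.coeff_succ_X_mul, PowerSeries.coeff_derivative,
          coeff_mk, coeff_mk]
        push_cast; ring
  have hdx : PowerSeries.derivative ℤ (1 - X : PowerSeries ℤ) = -1 := by
    rw [map_sub, Derivation.map_one_eq_zero, PowerSeries.derivative_X]; ring
  have hpow : PowerSeries.derivative ℤ ((1-X : PowerSeries ℤ)^(N+1))
      = PowerSeries.C (-((N:ℤ)+1)) * (1-X)^N := by
    rw [Derivation.leibniz_pow, hdx, Nat.add_sub_cancel, smul_eq_mul, mul_neg_one,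
      ← Nat.cast_smul_eq_nsmul ℤ]
    erw [smul_eq_C_mul]
    push_cast
    rw [map_neg]
    ring
  have hd : PowerSeries.derivative ℤ ((1-X)^(N+1) * PowerSeries.mk g)
      = (1-X)^(N+1) * PowerSeries.derivative ℤ (PowerSeries.mk g)
        + PowerSeries.C (-((N:ℤ)+1)) * ((1-X)^N * PowerSeries.mk g) := by
    rw [Derivation.leibniz, hpow, smul_eq_mul, smul_eq_mul]
    ring
  rw [hmk, hd]
  rw [show (1-X : PowerSeries ℤ)^(N+2) = (1-X)^N * (1-X) * (1-X) by
        rw [← pow_succ, ← pow_succ],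
      show (1-X : PowerSeries ℤ)^(N+1) = (1-X)^N * (1-X) by rw [← pow_succ],
      map_neg]
  ring


lemma zc_gen (N : ℕ) (g : ℕ → ℤ) (j : ℤ) :
    zc ((1-X)^(N+2) * PowerSeries.mk (fun m => ((m:ℤ)+1) * g m)) j
      = (j+1) * zc ((1-X)^(N+1) * PowerSeries.mk g) j
        + ((N:ℤ)+1-j) * zc ((1-X)^(N+1) * PowerSeries.mk g) (j-1) := by
  rw [gen N g, zc_add, zc_add, zc_one_sub_X_mul, zc_C_mul, zc_X_mul,
    show X*(1-X)*(PowerSeries.derivative ℤ ((1-X)^(N+1) * PowerSeries.mk g))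
      = X*((1-X)*PowerSeries.derivative ℤ ((1-X)^(N+1) * PowerSeries.mk g)) by ring,
    zc_X_mul, zc_one_sub_X_mul, zc_deriv, zc_deriv,
    show j - 1 + 1 = j by ring, show j - 1 - 1 + 1 = j - 1 by ring]
  ring

lemma mk_add (f g : ℕ → ℤ) :
    PowerSeries.mk f + PowerSeries.mk g = PowerSeries.mk (fun m => f m + g m) := by
  ext n; simp

lemma C_mul_mk (c : ℤ) (f : ℕ → ℤ) :
    PowerSeries.C c * PowerSeries.mk f = PowerSeries.mk (fun m => c * f m) := by
  ext n; rw [PowerSeries.coeff_C_mul, coeff_mk, coeff_mk]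

lemma zc_lstep (a b : ℕ) (j : ℤ) :
    zc (deltaSC a (b+1)) j
      = (j+1) * zc (deltaSC a b) j + (((2*a+b:ℕ):ℤ)+1-j) * zc (deltaSC a b) (j-1) := by
  have h : deltaSC a (b+1)
      = (1-X)^((2*a+b)+2) * PowerSeries.mk (fun m => ((m:ℤ)+1) * gfun a b m) := by
    rw [deltaSC_eq, show 2*a+(b+1)+1 = (2*a+b)+2 by ring]
    congr 1
    apply mk_eq
    intro m
    simp only [gfun, pow_succ]
    ring
  rw [h, zc_gen, deltaSC_eq]

lemma zc_dstep (a b : ℕ) (j : ℤ) :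
    2 * zc (deltaSC (a+1) b) j
      = (j+1)*(j+2) * zc (deltaSC a b) j
        + 2*(j+1)*(((2*a+b:ℕ):ℤ)+1-j) * zc (deltaSC a b) (j-1)
        + (((2*a+b:ℕ):ℤ)+1-j)*(((2*a+b:ℕ):ℤ)+2-j) * zc (deltaSC a b) (j-2) := by
  have h2 : PowerSeries.C 2 * deltaSC (a+1) b
      = (1-X)^((2*a+b)+3) * PowerSeries.mk (fun m => ((m:ℤ)+1)*(((m:ℤ)+1) * gfun a b m))
        + (1-X)^((2*a+b)+3) * PowerSeries.mk (fun m => ((m:ℤ)+1) * gfun a b m) := by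
    rw [deltaSC_eq, show 2*(a+1)+b+1 = (2*a+b)+3 by ring, ← mul_add, mk_add,
      ← mul_assoc, mul_comm (PowerSeries.C 2) ((1-X)^((2*a+b)+3)), mul_assoc, C_mul_mk]
    congr 1
    apply mk_eq
    intro m
    simp only [gfun, pow_succ]
    linear_combination ((((m:ℤ)+1) * ((m:ℤ)+2) / 2)^a * ((m:ℤ)+1)^b) * two_mul_T m
  have hz2 : 2 * zc (deltaSC (a+1) b) j = zc (PowerSeries.C 2 * deltaSC (a+1) b) j := by
    rw [zc_C_mul]
  rw [hz2, h2, zc_add]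
  have hA := zc_gen ((2*a+b)+1) (fun m => ((m:ℤ)+1) * gfun a b m) j
  rw [show (2*a+b)+1+2 = (2*a+b)+3 by ring, show (2*a+b)+1+1 = (2*a+b)+2 by ring] at hA
  have hB : zc ((1-X)^((2*a+b)+3) * PowerSeries.mk (fun m => ((m:ℤ)+1) * gfun a b m)) j
      = zc ((1-X)^((2*a+b)+2) * PowerSeries.mk (fun m => ((m:ℤ)+1) * gfun a b m)) j
        - zc ((1-X)^((2*a+b)+2) * PowerSeries.mk (fun m => ((m:ℤ)+1) * gfun a b m)) (j-1) := by
    rw [show (2*a+b)+3 = ((2*a+b)+2)+1 by ring, pow_succ,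
      mul_comm ((1-X : PowerSeries ℤ)^((2*a+b)+2)) (1-X), mul_assoc, zc_one_sub_X_mul]
  have hG := zc_gen (2*a+b) (gfun a b) j
  have hG1 := zc_gen (2*a+b) (gfun a b) (j-1)
  rw [show j-1+1 = j by ring, show j-1-1 = j-2 by ring] at hG1
  rw [hA, hB, hG, hG1, deltaSC_eq]
  push_cast
  ring

lemma one_sub_X_mul_mk_one : (1-X) * PowerSeries.mk (fun _ => (1:ℤ)) = 1 := by
  ext n
  cases n with
  | zero => simp [coeff_mk]
  | succ n =>
      rw [sub_mul, one_mul, map_sub, PowerSeries.coeff_succ_X_mul, coeff_mk, coeff_mk,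
        PowerSeries.coeff_one]
      simp

lemma deltaSC_zero_zero : deltaSC 0 0 = 1 := by
  rw [deltaSC_eq]
  norm_num
  rw [mk_eq (g := fun _ => (1:ℤ)) (by intro m; simp [gfun]), one_sub_X_mul_mk_one]

lemma deltaSC_zero_one : deltaSC 0 1 = 1 := by
  rw [deltaSC_eq]
  have h1 : PowerSeries.mk (gfun 0 1)
      = PowerSeries.mk (fun _ => (1:ℤ)) * PowerSeries.mk (fun _ => (1:ℤ)) := by
    ext n
    rw [coeff_mk, PowerSeries.coeff_mul]
    simp [coeff_mk, gfun, Finset.Nat.card_antidiagonal]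
  rw [h1, show 2*0+1+1 = 2 by norm_num]
  calc (1-X : PowerSeries ℤ)^2 * (PowerSeries.mk (fun _ => (1:ℤ)) * PowerSeries.mk (fun _ => (1:ℤ)))
      = ((1-X) * PowerSeries.mk (fun _ => (1:ℤ))) * ((1-X) * PowerSeries.mk (fun _ => (1:ℤ))) := by
        ring
    _ = 1 := by rw [one_sub_X_mul_mk_one]; norm_num

lemma zc_one (j : ℤ) : zc 1 j = if j = 0 then 1 else 0 := by
  unfold zc
  rcases lt_or_ge j 0 with h | h
  · rw [if_neg (not_le.2 h), if_neg (by omega)]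
  · rw [if_pos h, PowerSeries.coeff_one]
    by_cases h0 : j = 0
    · simp [h0]
    · rw [if_neg (by omega), if_neg h0]


/-- symmetric + unimodal, supported on `[0,D]` (the Eulerian/cube invariant). -/
def SU (D : ℤ) (c : ℤ → ℤ) : Prop :=
  (∀ j, 0 ≤ c j) ∧ (∀ j, j < 0 ∨ D < j → c j = 0) ∧
  (∀ j, 0 ≤ j → j ≤ D → c j = c (D - j)) ∧
  (∀ j, 2*j + 1 ≤ D → c j ≤ c (j+1))

/-- alternatingly increasing, supported on `[0,D]`. -/
def AI (D : ℤ) (c : ℤ → ℤ) : Prop :=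
  (∀ j, 0 ≤ c j) ∧ (∀ j, j < 0 ∨ D < j → c j = 0) ∧
  (∀ j, 2*j ≤ D → c j ≤ c (D - j)) ∧
  (∀ j, 2*j + 1 ≤ D → c (D - j) ≤ c (j+1))

lemma SU_up {D : ℤ} {c : ℤ → ℤ} (h : SU D c) :
    ∀ j : ℤ, 2*j ≤ D+1 → c (j-1) ≤ c j := by
  intro j hj
  obtain ⟨hpos, hz, hsym, hinc⟩ := h
  have := hinc (j-1) (by omega)
  rwa [show j-1+1 = j by ring] at this

lemma SU_down {D : ℤ} {c : ℤ → ℤ} (h : SU D c) :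
    ∀ j : ℤ, D+1 ≤ 2*j → j ≤ D → c j ≤ c (j-1) := by
  intro j hj hj2
  obtain ⟨hpos, hz, hsym, hinc⟩ := h
  have hj0 : 0 ≤ j := by omega
  have E1 : c j = c (D-j) := hsym j hj0 hj2
  have E2 : c (j-1) = c (D-(j-1)) := hsym (j-1) (by omega) (by omega)
  have I : c (D-j) ≤ c ((D-j)+1) := hinc (D-j) (by omega)
  rw [E1, E2, show D-(j-1) = (D-j)+1 by ring]
  exact I

lemma AI_up {D : ℤ} {c : ℤ → ℤ} (h : AI D c) :
    ∀ j : ℤ, 2*j ≤ D+1 → c (j-1) ≤ c j := by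
  intro j hj
  obtain ⟨hpos, hz, h1, h2⟩ := h
  have A : c (j-1) ≤ c (D-(j-1)) := h1 (j-1) (by omega)
  have B : c (D-(j-1)) ≤ c (j-1+1) := h2 (j-1) (by omega)
  have := le_trans A B
  rwa [show j-1+1 = j by ring] at this

lemma AI_down {D : ℤ} {c : ℤ → ℤ} (h : AI D c) :
    ∀ j : ℤ, D+2 ≤ 2*j → j ≤ D+1 → c j ≤ c (j-1) := by
  intro j hj hj2
  obtain ⟨hpos, hz, h1, h2⟩ := h
  by_cases hD : j = D+1
  · rw [hD, hz (D+1) (Or.inr (by omega)), show D+1-1 = D by ring]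
    exact hpos D
  · have A : c (D-(D-j)) ≤ c ((D-j)+1) := h2 (D-j) (by omega)
    have B : c ((D-j)+1) ≤ c (D-((D-j)+1)) := h1 ((D-j)+1) (by omega)
    rw [show D-(D-j) = j by ring] at A
    rw [show D-((D-j)+1) = j-1 by ring] at B
    exact le_trans A B

/-- the `×ℓ` step preserves symmetric-unimodality. -/
lemma SU_step {D : ℤ} {c e : ℤ → ℤ} (hc : SU D c)
    (he : ∀ j, e j = (j+1) * c j + (D + 2 - j) * c (j-1)) : SU (D+1) e := by
  obtain ⟨hpos, hzero, hsym, hinc⟩ := hc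
  have hzneg : ∀ j : ℤ, j < 0 → c j = 0 := fun j h => hzero j (Or.inl h)
  have hzhi : ∀ j : ℤ, D < j → c j = 0 := fun j h => hzero j (Or.inr h)
  have hez : ∀ j : ℤ, j < 0 ∨ D + 1 < j → e j = 0 := by
    intro j hj
    rcases hj with h | h
    · rw [he j, hzneg j h, hzneg (j-1) (by omega)]; ring
    · rw [he j, hzhi j (by omega), hzhi (j-1) (by omega)]; ring
  have hep : ∀ j : ℤ, 0 ≤ e j := by
    intro j
    rcases lt_or_ge j 0 with h | h
    · rw [hez j (Or.inl h)]
    rcases le_or_gt j (D+1) with h2 | h2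
    · rw [he j]
      have c1 : (0:ℤ) ≤ j+1 := by omega
      have c2 : (0:ℤ) ≤ D+2-j := by omega
      exact add_nonneg (mul_nonneg c1 (hpos j)) (mul_nonneg c2 (hpos (j-1)))
    · rw [hez j (Or.inr h2)]
  refine ⟨hep, hez, ?_, ?_⟩
  · -- symmetry
    intro j hj0 hjD
    have E1 : c (D+1-j) = c (j-1) := by
      by_cases h0 : j = 0
      · rw [h0, hzhi (D+1-0) (by omega), hzneg (0-1) (by omega)]
      · rw [hsym (D+1-j) (by omega) (by omega), show D-(D+1-j) = j-1 by ring]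
    have E2 : c (D - j) = c j := by
      by_cases hD : j ≤ D
      · exact (hsym j hj0 hD).symm
      · rw [hzneg (D-j) (by omega), hzhi j (by omega)]
    rw [he j, he (D+1-j), show D+1-j-1 = D-j by ring, E1, E2]
    ring
  · -- increasing up to the middle
    intro j hj
    rcases lt_or_ge j 0 with h | h
    · rw [hez j (Or.inl h)]; exact hep (j+1)
    · have h1 : c (j-1) ≤ c j := by
        rcases lt_or_ge (j-1) 0 with h' | h'
        · rw [hzneg (j-1) h']; exact hpos j
        · have := hinc (j-1) (by omega)
          rwa [show j-1+1 = j by ring] at this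
      have h2 : c (j-1) ≤ c (j+1) := by
        by_cases hD : 2*j+1 ≤ D
        · exact le_trans h1 (hinc j hD)
        · have hj1 : c (j+1) = c (j-1) := by
            by_cases hle : j+1 ≤ D
            · rw [hsym (j+1) (by omega) hle, show D-(j+1) = j-1 by omega]
            · have hj0 : j = 0 := by omega
              rw [hj0, hzhi (0+1) (by omega), hzneg (0-1) (by omega)]
          rw [hj1]
      rw [he j, he (j+1), show j+1-1 = j by ring]
      have t1 : 0 ≤ (j+2) * (c (j+1) - c (j-1)) :=
        mul_nonneg (by omega) (by linarith)
      have t2 : 0 ≤ (D-2*j) * (c j - c (j-1)) :=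
        mul_nonneg (by omega) (by linarith)
      linarith


/-- the `×Δ` step turns a symmetric-unimodal δ-vector into an
alternatingly increasing one. -/
lemma SU_dstep {D : ℤ} {c f : ℤ → ℤ} (hc : SU D c)
    (hf : ∀ j, 2 * f j = (j+1)*(j+2) * c j + 2*(j+1)*(D+2-j) * c (j-1)
      + (D+2-j)*(D+3-j) * c (j-2)) : AI (D+1) f := by
  obtain ⟨hpos, hzero, hsym, hinc⟩ := hc
  have hzneg : ∀ j : ℤ, j < 0 → c j = 0 := fun j h => hzero j (Or.inl h)
  have hzhi : ∀ j : ℤ, D < j → c j = 0 := fun j h => hzero j (Or.inr h)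
  have hfz : ∀ j : ℤ, j < 0 ∨ D + 1 < j → f j = 0 := by
    intro j hj
    rcases hj with h | h
    · have h2 : 2 * f j = 0 := by
        rw [hf j, hzneg j h, hzneg (j-1) (by omega), hzneg (j-2) (by omega)]; ring
      omega
    · rcases eq_or_lt_of_le (show D+2 ≤ j by omega) with h2 | h2
      · have h3 : 2 * f j = 0 := by
          rw [hf j, hzhi j (by omega), hzhi (j-1) (by omega), show D+2-j = 0 by omega]
          ring
        omega
      · have h3 : 2 * f j = 0 := by
          rw [hf j, hzhi j (by omega), hzhi (j-1) (by omega), hzhi (j-2) (by omega)]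
          ring
        omega
  have hfp : ∀ j : ℤ, 0 ≤ f j := by
    intro j
    rcases lt_or_ge j 0 with h | h
    · rw [hfz j (Or.inl h)]
    rcases le_or_gt j (D+1) with h2 | h2
    · have h3 : 0 ≤ 2 * f j := by
        rw [hf j]
        have c1 : (0:ℤ) ≤ (j+1)*(j+2) := mul_nonneg (by omega) (by omega)
        have c2 : (0:ℤ) ≤ 2*(j+1)*(D+2-j) :=
          mul_nonneg (mul_nonneg (by omega) (by omega)) (by omega)
        have c3 : (0:ℤ) ≤ (D+2-j)*(D+3-j) := mul_nonneg (by omega) (by omega)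
        exact add_nonneg (add_nonneg (mul_nonneg c1 (hpos j))
          (mul_nonneg c2 (hpos (j-1)))) (mul_nonneg c3 (hpos (j-2)))
      omega
    · rw [hfz j (Or.inr h2)]
  -- the three symmetry substitutions
  have EA : ∀ j : ℤ, 0 ≤ j → 2*j ≤ D+1 → c (D+1-j) = c (j-1) := by
    intro j hj0 hj
    by_cases h0 : j = 0
    · rw [h0, show D+1-(0:ℤ) = D+1 by ring, hzhi (D+1) (by omega), hzneg (0-1) (by omega)]
    · rw [hsym (D+1-j) (by omega) (by omega), show D-(D+1-j) = j-1 by ring]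
  have EB : ∀ j : ℤ, 0 ≤ j → 2*j ≤ D → c (D-j) = c j := by
    intro j hj0 hj
    exact (hsym j hj0 (by omega)).symm
  have EC : ∀ j : ℤ, 0 ≤ j → 2*j ≤ D → c (D-1-j) = c (j+1) := by
    intro j hj0 hj
    by_cases hle : j+1 ≤ D
    · rw [show D-1-j = D-(j+1) by ring, ← hsym (j+1) (by omega) hle]
    · have hj' : j = 0 := by omega
      have hD' : D = 0 := by omega
      rw [hj', hD']
      rw [show (0:ℤ)-1-0 = -1 by ring, hzneg (-1) (by omega), hzhi (0+1) (by omega)]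
  have hup : ∀ j : ℤ, 2*j ≤ D+1 → c (j-1) ≤ c j := by
    intro j hj
    rcases lt_or_ge (j-1) 0 with h' | h'
    · rw [hzneg (j-1) h']; exact hpos j
    · have := hinc (j-1) (by omega)
      rwa [show j-1+1 = j by ring] at this
  refine ⟨hfp, hfz, ?_, ?_⟩
  · -- f j ≤ f (D+1-j) for 2j ≤ D+1
    intro j hj
    rcases lt_or_ge j 0 with h | h
    · rw [hfz j (Or.inl h)]; exact hfp _
    rcases eq_or_lt_of_le hj with he | he
    · rw [show D+1-j = j by omega]
    rcases eq_or_lt_of_le (show 2*j ≤ D by omega) with hD2 | hD2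
    · -- 2j = D
      rw [show D+1-j = j+1 by omega]
      have i1 : c (j-2) ≤ c (j-1) := by
        have := hup (j-1) (by omega)
        rwa [show j-1-1 = j-2 by ring] at this
      have i2 : c (j-1) ≤ c j := hup j (by omega)
      have Eplus : c (j+1) = c (j-1) := by
        by_cases hle : j+1 ≤ D
        · rw [hsym (j+1) (by omega) hle, show D-(j+1) = j-1 by omega]
        · have hj' : j = 0 := by omega
          have hD' : D = 0 := by omega
          rw [hj', hzhi (0+1) (by omega), hzneg (0-1) (by omega)]
      have h2 := hf j
      have h3 := hf (j+1)
      rw [show D+2-j = j+2 by omega, show D+3-j = j+3 by omega] at h2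
      rw [show D+2-(j+1) = j+1 by omega, show D+3-(j+1) = j+2 by omega,
        show j+1-1 = j by ring, show j+1-2 = j-1 by ring, Eplus] at h3
      have t1 : (0:ℤ) ≤ (j+1)*((j+2)*(c j - c (j-2))) :=
        mul_nonneg (by omega) (mul_nonneg (by omega) (by linarith))
      have t2 : (0:ℤ) ≤ 2*((j+2)*(c (j-1) - c (j-2))) :=
        mul_nonneg (by omega) (mul_nonneg (by omega) (by linarith))
      nlinarith [h2, h3, t1, t2]
    · -- 2j + 1 ≤ D
      have i1 : c (j-2) ≤ c (j-1) := by
        have := hup (j-1) (by omega)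
        rwa [show j-1-1 = j-2 by ring] at this
      have i2 : c (j-1) ≤ c j := hup j (by omega)
      have i3 : c j ≤ c (j+1) := hinc j (by omega)
      have h2 := hf j
      have h3 := hf (D+1-j)
      rw [show D+1-j+1 = D+2-j by ring, show D+1-j+2 = D+3-j by ring,
        show D+2-(D+1-j) = j+1 by ring, show D+3-(D+1-j) = j+2 by ring,
        show D+1-j-1 = D-j by ring, show D+1-j-2 = D-1-j by ring,
        EA j h (by omega), EB j h (by omega), EC j h (by omega)] at h3
      have t1 : (0:ℤ) ≤ (D+2-j)*((D+3-j)*(c (j-1) - c (j-2))) :=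
        mul_nonneg (by omega) (mul_nonneg (by omega) (by linarith))
      have t2 : (0:ℤ) ≤ 2*(j+1)*((D+2-j)*(c j - c (j-1))) :=
        mul_nonneg (mul_nonneg (by omega) (by omega)) (mul_nonneg (by omega) (by linarith))
      have t3 : (0:ℤ) ≤ (j+1)*((j+2)*(c (j+1) - c j)) :=
        mul_nonneg (by omega) (mul_nonneg (by omega) (by linarith))
      nlinarith [h2, h3, t1, t2, t3]
  · -- f (D+1-j) ≤ f (j+1) for 2j+1 ≤ D+1
    intro j hj
    rcases lt_or_ge j 0 with h | h
    · rw [hfz (D+1-j) (Or.inr (by omega))]; exact hfp _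
    rcases eq_or_lt_of_le (show 2*j ≤ D by omega) with hD2 | hD2
    · rw [show D+1-j = j+1 by omega]
    · -- 2j + 1 ≤ D
      have i2 : c (j-1) ≤ c j := hup j (by omega)
      have i3 : c j ≤ c (j+1) := hinc j (by omega)
      have h2 := hf (j+1)
      have h3 := hf (D+1-j)
      rw [show j+1+1 = j+2 by ring, show j+1+2 = j+3 by ring,
        show D+2-(j+1) = D+1-j by ring, show D+3-(j+1) = D+2-j by ring,
        show j+1-1 = j by ring, show j+1-2 = j-1 by ring] at h2
      rw [show D+1-j+1 = D+2-j by ring, show D+1-j+2 = D+3-j by ring,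
        show D+2-(D+1-j) = j+1 by ring, show D+3-(D+1-j) = j+2 by ring,
        show D+1-j-1 = D-j by ring, show D+1-j-2 = D-1-j by ring,
        EA j h (by omega), EB j h (by omega), EC j h (by omega)] at h3
      have t1 : (0:ℤ) ≤ 2*((D+2-j)*(c j - c (j-1))) :=
        mul_nonneg (by omega) (mul_nonneg (by omega) (by linarith))
      have t2 : (0:ℤ) ≤ 2*((j+2)*(c (j+1) - c j)) :=
        mul_nonneg (by omega) (mul_nonneg (by omega) (by linarith))
      nlinarith [h2, h3, t1, t2]


/-- the `×Δ` step preserves alternating increasingness. -/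
lemma AI_dstep {D : ℤ} {c f : ℤ → ℤ} (hc : AI D c)
    (hf : ∀ j, 2 * f j = (j+1)*(j+2) * c j + 2*(j+1)*(D+3-j) * c (j-1)
      + (D+3-j)*(D+4-j) * c (j-2)) : AI (D+2) f := by
  have hup := AI_up hc
  obtain ⟨hpos, hzero, h1, h2⟩ := hc
  have hzneg : ∀ j : ℤ, j < 0 → c j = 0 := fun j h => hzero j (Or.inl h)
  have hzhi : ∀ j : ℤ, D < j → c j = 0 := fun j h => hzero j (Or.inr h)
  have hfz : ∀ j : ℤ, j < 0 ∨ D + 2 < j → f j = 0 := by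
    intro j hj
    have h3 : 2 * f j = 0 := by
      rcases hj with h | h
      · rw [hf j, hzneg j h, hzneg (j-1) (by omega), hzneg (j-2) (by omega)]; ring
      · rw [hf j, hzhi j (by omega), hzhi (j-1) (by omega), hzhi (j-2) (by omega)]; ring
    omega
  have hfp : ∀ j : ℤ, 0 ≤ f j := by
    intro j
    rcases lt_or_ge j 0 with h | h
    · rw [hfz j (Or.inl h)]
    rcases le_or_gt j (D+2) with h2' | h2'
    · have h3 : 0 ≤ 2 * f j := by
        rw [hf j]
        have c1 : (0:ℤ) ≤ (j+1)*(j+2) := mul_nonneg (by omega) (by omega)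
        have c2 : (0:ℤ) ≤ 2*(j+1)*(D+3-j) :=
          mul_nonneg (mul_nonneg (by omega) (by omega)) (by omega)
        have c3 : (0:ℤ) ≤ (D+3-j)*(D+4-j) := mul_nonneg (by omega) (by omega)
        exact add_nonneg (add_nonneg (mul_nonneg c1 (hpos j))
          (mul_nonneg c2 (hpos (j-1)))) (mul_nonneg c3 (hpos (j-2)))
      omega
    · rw [hfz j (Or.inr h2')]
  refine ⟨hfp, hfz, ?_, ?_⟩
  · -- f j ≤ f (D+2-j) for 2j ≤ D+2
    intro j hj
    rcases lt_or_ge j 0 with h | h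
    · rw [hfz j (Or.inl h)]; exact hfp _
    rcases eq_or_lt_of_le hj with he | he
    · rw [show D+2-j = j by omega]
    rcases eq_or_lt_of_le (show 2*j ≤ D+1 by omega) with hD2 | hD2
    · -- 2j = D+1
      rw [show D+2-j = j+1 by omega]
      have a2' : c (j-1) ≤ c j := by
        have := h1 (j-1) (by omega)
        rwa [show D-(j-1) = j by omega] at this
      have a1' : c (j-2) ≤ c (j+1) := by
        have := h1 (j-2) (by omega)
        rwa [show D-(j-2) = j+1 by omega] at this
      have hh2 := hf j
      have hh3 := hf (j+1)
      rw [show D+3-j = j+2 by omega, show D+4-j = j+3 by omega] at hh2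
      rw [show D+3-(j+1) = j+1 by omega, show D+4-(j+1) = j+2 by omega,
        show j+1-1 = j by ring, show j+1-2 = j-1 by ring] at hh3
      have t1 : (0:ℤ) ≤ (j+2)*((j+3)*(c (j+1) - c (j-2))) :=
        mul_nonneg (by omega) (mul_nonneg (by omega) (by linarith))
      have t2 : (0:ℤ) ≤ (j+1)*((j+2)*(c j - c (j-1))) :=
        mul_nonneg (by omega) (mul_nonneg (by omega) (by linarith))
      nlinarith [hh2, hh3, t1, t2]
    · -- 2j ≤ D
      have a1 : c (j-2) ≤ c (D+2-j) := by
        have := h1 (j-2) (by omega)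
        rwa [show D-(j-2) = D+2-j by ring] at this
      have a2 : c (j-1) ≤ c (D+1-j) := by
        have := h1 (j-1) (by omega)
        rwa [show D-(j-1) = D+1-j by ring] at this
      have a3 : c j ≤ c (D-j) := h1 j (by omega)
      have hh2 := hf j
      have hh3 := hf (D+2-j)
      rw [show D+2-j+1 = D+3-j by ring, show D+2-j+2 = D+4-j by ring,
        show D+3-(D+2-j) = j+1 by ring, show D+4-(D+2-j) = j+2 by ring,
        show D+2-j-1 = D+1-j by ring, show D+2-j-2 = D-j by ring] at hh3
      have t1 : (0:ℤ) ≤ (D+3-j)*((D+4-j)*(c (D+2-j) - c (j-2))) :=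
        mul_nonneg (by omega) (mul_nonneg (by omega) (by linarith))
      have t2 : (0:ℤ) ≤ 2*(j+1)*((D+3-j)*(c (D+1-j) - c (j-1))) :=
        mul_nonneg (mul_nonneg (by omega) (by omega)) (mul_nonneg (by omega) (by linarith))
      have t3 : (0:ℤ) ≤ (j+1)*((j+2)*(c (D-j) - c j)) :=
        mul_nonneg (by omega) (mul_nonneg (by omega) (by linarith))
      nlinarith [hh2, hh3, t1, t2, t3]
  · -- f (D+2-j) ≤ f (j+1) for 2j+1 ≤ D+2
    intro j hj
    rcases lt_or_ge j 0 with h | h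
    · rw [hfz (D+2-j) (Or.inr (by omega))]; exact hfp _
    rcases eq_or_lt_of_le (show 2*j ≤ D+1 by omega) with hD2 | hD2
    · rw [show D+2-j = j+1 by omega]
    rcases eq_or_lt_of_le (show 2*j ≤ D by omega) with hD3 | hD3
    · -- 2j = D
      rw [show D+2-j = j+2 by omega]
      have e2a : c (j+1) ≤ c j := by
        have := h2 (j-1) (by omega)
        rwa [show D-(j-1) = j+1 by omega, show j-1+1 = j by ring] at this
      have e2b : c (j+2) ≤ c (j-1) := by
        have := h2 (j-2) (by omega)
        rwa [show D-(j-2) = j+2 by omega, show j-2+1 = j-1 by ring] at this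
      have e1a : c (j-1) ≤ c (j+1) := by
        have := h1 (j-1) (by omega)
        rwa [show D-(j-1) = j+1 by omega] at this
      have hh2 := hf (j+1)
      have hh3 := hf (j+2)
      rw [show D+3-(j+1) = j+2 by omega, show D+4-(j+1) = j+3 by omega,
        show j+1-1 = j by ring, show j+1-2 = j-1 by ring] at hh2
      rw [show D+3-(j+2) = j+1 by omega, show D+4-(j+2) = j+2 by omega,
        show j+2-1 = j+1 by ring, show j+2-2 = j by ring] at hh3
      have t1 : (0:ℤ) ≤ (j+2)*((j+3)*(c j - c (j+1))) :=
        mul_nonneg (by omega) (mul_nonneg (by omega) (by linarith))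
      have t2 : (0:ℤ) ≤ (j+3)*((j+4)*(c (j-1) - c (j+2))) :=
        mul_nonneg (by omega) (mul_nonneg (by omega) (by linarith))
      have t3 : (0:ℤ) ≤ 2*((j+3)*(c (j+1) - c (j-1))) :=
        mul_nonneg (by omega) (mul_nonneg (by omega) (by linarith))
      nlinarith [hh2, hh3, t1, t2, t3]
    · -- 2j+1 ≤ D
      have A : c (D+2-j) ≤ c (j-1) := by
        have := h2 (j-2) (by omega)
        rwa [show D-(j-2) = D+2-j by ring, show j-2+1 = j-1 by ring] at this
      have B : c (D+1-j) ≤ c j := by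
        have := h2 (j-1) (by omega)
        rwa [show D-(j-1) = D+1-j by ring, show j-1+1 = j by ring] at this
      have Cc : c (D-j) ≤ c (j+1) := h2 j (by omega)
      have B2 : c (j-1) ≤ c (D+1-j) := by
        have := h1 (j-1) (by omega)
        rwa [show D-(j-1) = D+1-j by ring] at this
      have A3 : c j ≤ c (D-j) := h1 j (by omega)
      have ch4 : c (D+2-j) ≤ c (D+1-j) := le_trans A B2
      have ch5 : c (D+1-j) ≤ c (D-j) := le_trans B A3
      have hh2 := hf (j+1)
      have hh3 := hf (D+2-j)
      rw [show D+3-(j+1) = D+2-j by ring, show D+4-(j+1) = D+3-j by ring,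
        show j+1+1 = j+2 by ring, show j+1+2 = j+3 by ring,
        show j+1-1 = j by ring, show j+1-2 = j-1 by ring] at hh2
      rw [show D+2-j+1 = D+3-j by ring, show D+2-j+2 = D+4-j by ring,
        show D+3-(D+2-j) = j+1 by ring, show D+4-(D+2-j) = j+2 by ring,
        show D+2-j-1 = D+1-j by ring, show D+2-j-2 = D-j by ring] at hh3
      have t1 : (0:ℤ) ≤ (j+2)*((j+3)*(c (j+1) - c (D-j))) :=
        mul_nonneg (by omega) (mul_nonneg (by omega) (by linarith))
      have t2 : (0:ℤ) ≤ 2*(j+2)*((D+2-j)*(c j - c (D+1-j))) :=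
        mul_nonneg (mul_nonneg (by omega) (by omega)) (mul_nonneg (by omega) (by linarith))
      have t3 : (0:ℤ) ≤ (D+2-j)*((D+3-j)*(c (j-1) - c (D+2-j))) :=
        mul_nonneg (by omega) (mul_nonneg (by omega) (by linarith))
      have t4 : (0:ℤ) ≤ 2*((j+2)*(c (D-j) - c (D+2-j))) :=
        mul_nonneg (by omega) (mul_nonneg (by omega) (by linarith))
      have t5 : (0:ℤ) ≤ 2*((D+1-2*j)*(c (D+1-j) - c (D+2-j))) :=
        mul_nonneg (by omega) (mul_nonneg (by omega) (by linarith))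
      nlinarith [hh2, hh3, t1, t2, t3, t4, t5]


lemma SU_one : SU 0 (zc 1) := by
  refine ⟨fun j => ?_, fun j hj => ?_, fun j hj0 hjD => ?_, fun j hj => ?_⟩
  · rw [zc_one]; split <;> norm_num
  · rw [zc_one, if_neg (by omega)]
  · have h0 : j = 0 := by omega
    rw [h0]; norm_num
  · rw [zc_one, zc_one, if_neg (show ¬ j = 0 by omega)]
    split <;> norm_num

lemma SU_deltaSC (b : ℕ) : SU (b:ℤ) (zc (deltaSC 0 (b+1))) := by
  induction b with
  | zero =>
      rw [show ((0:ℕ):ℤ) = 0 by norm_num, show (0:ℕ)+1 = 1 by norm_num, deltaSC_zero_one]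
      exact SU_one
  | succ b ih =>
      have he : ∀ j : ℤ, zc (deltaSC 0 (b+1+1)) j
          = (j+1) * zc (deltaSC 0 (b+1)) j + ((b:ℤ) + 2 - j) * zc (deltaSC 0 (b+1)) (j-1) := by
        intro j
        rw [zc_lstep 0 (b+1) j]
        push_cast
        ring
      have step := SU_step ih he
      push_cast
      exact step

lemma AI_deltaSC (a b : ℕ) : AI (2*(a:ℤ)+(b:ℤ)+1) (zc (deltaSC (a+1) (b+1))) := by
  induction a with
  | zero =>
      have step := SU_dstep (SU_deltaSC b) (f := zc (deltaSC 1 (b+1))) (fun j => by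
        rw [zc_dstep 0 (b+1) j]; push_cast; ring)
      simpa using step
  | succ a ih =>
      have step := AI_dstep ih (f := zc (deltaSC (a+1+1) (b+1))) (fun j => by
        rw [zc_dstep (a+1) (b+1) j]; push_cast; ring)
      push_cast
      rw [show 2*((a:ℤ)+1)+(b:ℤ)+1 = 2*(a:ℤ)+(b:ℤ)+1+2 by ring]
      exact step


end TwoDeltaAux

open TwoDeltaAux

/-- For `1 ≤ i ≤ (n+1)/2`:
`2 δ(Δ^i × ℓ^{n+1-2i}, t) − δ(Δ^{i-1} × ℓ^{n+3-2i}, t)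
  = (1−t) δ(Δ^{i-1} × ℓ^{n-2(i-1)}, t)`;
consequently `δ_j(Δ^{i-1} × ℓ^{n+3-2i}) ≤ 2 δ_j(Δ^i × ℓ^{n+1-2i})` for
`0 ≤ j ≤ ⌊(n-1)/2⌋` and the reverse inequality for `⌊(n-1)/2⌋+1 ≤ j ≤ n-1`. -/
theorem two_delta_difference (n i : ℕ) (hi : 1 ≤ i) (hin : 2 * i ≤ n + 1) :
    (2 * deltaSC i (n + 1 - 2 * i) - deltaSC (i - 1) (n + 3 - 2 * i)
        = (1 - PowerSeries.X) * deltaSC (i - 1) (n - 2 * (i - 1)))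
    ∧ (∀ j, j ≤ (n - 1) / 2 →
        PowerSeries.coeff j (deltaSC (i - 1) (n + 3 - 2 * i))
          ≤ 2 * PowerSeries.coeff j (deltaSC i (n + 1 - 2 * i)))
    ∧ (∀ j, (n - 1) / 2 + 1 ≤ j → j ≤ n - 1 →
        2 * PowerSeries.coeff j (deltaSC i (n + 1 - 2 * i))
          ≤ PowerSeries.coeff j (deltaSC (i - 1) (n + 3 - 2 * i))) := by
  obtain ⟨a, rfl⟩ : ∃ a, i = a + 1 := ⟨i - 1, by omega⟩
  obtain ⟨b, rfl⟩ : ∃ b, n = 2*a + b + 1 := ⟨n - 2*a - 1, by omega⟩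
  simp only [show 2*a+b+1+1 - 2*(a+1) = b from by omega,
             show 2*a+b+1+3 - 2*(a+1) = b+2 from by omega,
             show a+1-1 = a from by omega,
             show 2*a+b+1 - 2*a = b+1 from by omega,
             show 2*a+b+1-1 = 2*a+b from by omega]
  have key := key_identity a b
  have hcoeff : ∀ j : ℕ,
      2 * (PowerSeries.coeff j (deltaSC (a+1) b)) - PowerSeries.coeff j (deltaSC a (b+2))
        = zc (deltaSC a (b+1)) (j:ℤ) - zc (deltaSC a (b+1)) ((j:ℤ)-1) := by
    intro j
    calc 2 * (PowerSeries.coeff j (deltaSC (a+1) b)) - PowerSeries.coeff j (deltaSC a (b+2))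
        = PowerSeries.coeff j (2 * deltaSC (a+1) b - deltaSC a (b+2)) := by
          rw [show (2 : PowerSeries ℤ) * deltaSC (a+1) b
                = deltaSC (a+1) b + deltaSC (a+1) b from two_mul _,
              map_sub, map_add]
          ring
      _ = PowerSeries.coeff j ((1 - X) * deltaSC a (b+1)) := by rw [key]
      _ = zc ((1 - X) * deltaSC a (b+1)) (j:ℤ) := (zc_natCast _ j).symm
      _ = zc (deltaSC a (b+1)) (j:ℤ) - zc (deltaSC a (b+1)) ((j:ℤ)-1) := zc_one_sub_X_mul _ _
  have hud : (∀ j : ℤ, 2*j ≤ 2*(a:ℤ)+(b:ℤ) →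
        zc (deltaSC a (b+1)) (j-1) ≤ zc (deltaSC a (b+1)) j)
      ∧ (∀ j : ℤ, 2*(a:ℤ)+(b:ℤ)+1 ≤ 2*j → j ≤ 2*(a:ℤ)+(b:ℤ) →
        zc (deltaSC a (b+1)) j ≤ zc (deltaSC a (b+1)) (j-1)) := by
    cases a with
    | zero =>
        have h := SU_deltaSC b
        exact ⟨fun j hj => SU_up h j (by omega),
          fun j hj hj2 => SU_down h j (by omega) (by omega)⟩
    | succ a' =>
        have h := AI_deltaSC a' b
        exact ⟨fun j hj => AI_up h j (by omega),
          fun j hj hj2 => AI_down h j (by omega) (by omega)⟩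
  refine ⟨key, ?_, ?_⟩
  · intro j hj
    have h2j : 2*(j:ℤ) ≤ 2*(a:ℤ)+(b:ℤ) := by
      have : 2*j ≤ 2*a+b := by omega
      exact_mod_cast this
    have := hud.1 (j:ℤ) h2j
    linarith [hcoeff j, this]
  · intro j hj1 hj2
    have h2j : 2*(a:ℤ)+(b:ℤ)+1 ≤ 2*(j:ℤ) := by
      have : 2*a+b+1 ≤ 2*j := by omega
      exact_mod_cast this
    have hj2' : (j:ℤ) ≤ 2*(a:ℤ)+(b:ℤ) := by exact_mod_cast hj2
    have := hud.2 (j:ℤ) h2j hj2'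
    linarith [hcoeff j, this]
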